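/- For positive real numbers a ≠ b with 0 < |b−a| < 1, the inequality [Γ(b)/Γ(a)]^{1/(b−a)} < √(ab) · (a/b)^{1/(2(b−a))} holds; for |b−a| > 1 the reversed inequality holds. -/

import Mathlib

open Real Filter Set Topology

noncomputable def dd (x : ℝ) : ℝ := (x + 1/2) * (Real.log (x+1) - Real.log x) - 1
noncomputable def dd1 (x : ℝ) : ℝ := (Real.log (x+1) - Real.log x) + (x + 1/2) * (1/(x+1) - 1/x)

lemma hasDerivAt_dd {x : ℝ} (hx : 0 < x) : HasDerivAt dd (dd1 x) x := by
  have h1 : HasDerivAt (fun y : ℝ => Real.log (y+1) - Real.log y) (1/(x+1) - 1/x) x := by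
    have := ((hasDerivAt_id x).add_const 1).log (by positivity)
    have h2 := (hasDerivAt_id x).log hx.ne'
    exact (this.sub h2).congr_deriv (by simp [one_div])
  have h0 : HasDerivAt (fun y : ℝ => y + 1/2) 1 x := (hasDerivAt_id x).add_const _
  have := h0.mul h1
  have h3 := this.sub_const 1
  exact h3.congr_deriv (by unfold dd1; ring)

lemma hasDerivAt_dd1 {x : ℝ} (hx : 0 < x) :
    HasDerivAt dd1 ((1/2) / (x^2 * (x+1)^2)) x := by
  have h1 : HasDerivAt (fun y : ℝ => Real.log (y+1) - Real.log y) (1/(x+1) - 1/x) x := by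
    have := ((hasDerivAt_id x).add_const 1).log (by positivity)
    have h2 := (hasDerivAt_id x).log hx.ne'
    exact (this.sub h2).congr_deriv (by simp [one_div])
  have h2 : HasDerivAt (fun y : ℝ => 1/(y+1) - 1/y) (-(1/(x+1)^2) + 1/x^2) x := by
    have ha : HasDerivAt (fun y : ℝ => 1/(y+1)) (-(1/(x+1)^2)) x := by
      have := ((hasDerivAt_id x).add_const 1).inv (by positivity)
      simp only [one_div]
      exact this.congr_deriv (by simp [neg_div])
    have hb : HasDerivAt (fun y : ℝ => 1/y) (-(1/x^2)) x := by
      have := (hasDerivAt_id x).inv hx.ne'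
      simp only [one_div]
      exact this.congr_deriv (by simp [neg_div])
    exact (ha.sub hb).congr_deriv (by ring)
  have h0 : HasDerivAt (fun y : ℝ => y + 1/2) 1 x := (hasDerivAt_id x).add_const _
  have := h1.add (h0.mul h2)
  refine this.congr_deriv ?_
  field_simp
  ring

lemma dd_strictConvex : StrictConvexOn ℝ (Ioi (0:ℝ)) dd := by
  apply strictConvexOn_of_deriv2_pos (convex_Ioi 0)
  · intro x hx
    exact (hasDerivAt_dd hx).continuousAt.continuousWithinAt
  · intro x hx
    rw [interior_Ioi] at hx
    have hx' : 0 < x := hx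
    have hd : deriv dd =ᶠ[nhds x] dd1 := by
      filter_upwards [eventually_gt_nhds hx] with y hy using (hasDerivAt_dd hy).deriv
    have : deriv (deriv dd) x = (1/2) / (x^2 * (x+1)^2) := by
      rw [Filter.EventuallyEq.deriv_eq hd]
      exact (hasDerivAt_dd1 hx).deriv
    simp only [Function.iterate_succ, Function.iterate_zero, Function.comp_apply, id_eq]
    rw [this]
    exact div_pos one_half_pos (mul_pos (pow_pos hx 2) (pow_pos (by linarith : (0:ℝ) < x+1) 2))

noncomputable def uu (x : ℝ) : ℝ := Real.log (Real.Gamma x) - (x - 1/2) * Real.log x + x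

lemma uu_rec {x : ℝ} (hx : 0 < x) : uu x = uu (x+1) + dd x := by
  have hG : Real.Gamma (x+1) = x * Real.Gamma x := Real.Gamma_add_one hx.ne'
  have hGpos : 0 < Real.Gamma x := Real.Gamma_pos_of_pos hx
  unfold uu dd
  rw [hG, Real.log_mul hx.ne' hGpos.ne']
  ring

lemma uu_telescope {x : ℝ} (hx : 0 < x) (n : ℕ) :
    uu x = uu (x + n) + ∑ k ∈ Finset.range n, dd (x + k) := by
  induction n with
  | zero => simp
  | succ n ih =>
    rw [ih, Finset.sum_range_succ]
    have h1 : uu (x + n) = uu (x + n + 1) + dd (x + n) := uu_rec (by positivity)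
    rw [h1]
    push_cast
    rw [show x + ((n:ℝ) + 1) = x + (n:ℝ) + 1 by ring]
    ring

lemma gamma_prod {x : ℝ} (hx : 0 < x) (n : ℕ) :
    Real.Gamma (x + n + 1) = (∏ j ∈ Finset.range (n+1), (x + j)) * Real.Gamma x := by
  induction n with
  | zero => simp [Real.Gamma_add_one hx.ne']
  | succ n ih =>
    rw [Finset.prod_range_succ]
    have h1 : Real.Gamma (x + (n+1:ℕ) + 1) = (x + n + 1) * Real.Gamma (x + n + 1) := by
      rw [show x + ((n+1:ℕ):ℝ) + 1 = (x + n + 1) + 1 by push_cast; ring]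
      exact Real.Gamma_add_one (by positivity)
    rw [h1, ih]
    push_cast
    ring

lemma log_ratio_tendsto {x : ℝ} (hx : 0 < x) :
    Tendsto (fun n : ℕ => Real.log (Real.Gamma (x + n + 1)) - x * Real.log n - Real.log (Nat.factorial n : ℝ))
      atTop (𝓝 0) := by
  have h1 := Real.GammaSeq_tendsto_Gamma x
  have hGx : 0 < Real.Gamma x := Real.Gamma_pos_of_pos hx
  have h2 : Tendsto (fun n : ℕ => Real.GammaSeq x n / Real.Gamma x) atTop (𝓝 1) := by
    simpa [div_self hGx.ne'] using h1.div_const (Real.Gamma x)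
  have h3 : Tendsto (fun n : ℕ => Real.log (Real.GammaSeq x n / Real.Gamma x)) atTop (𝓝 0) := by
    have := (Real.continuousAt_log one_ne_zero).tendsto.comp h2
    rw [Real.log_one] at this
    exact this
  have h4 : Tendsto (fun n : ℕ => -Real.log (Real.GammaSeq x n / Real.Gamma x)) atTop (𝓝 0) := by
    simpa using h3.neg
  refine h4.congr' ?_
  filter_upwards [eventually_ge_atTop 1] with n hn
  have hn0 : (0:ℝ) < n := by exact_mod_cast hn
  have hprod : (0:ℝ) < ∏ j ∈ Finset.range (n+1), (x + j) :=
    Finset.prod_pos (fun j _ => by positivity)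
  have hfac : (0:ℝ) < (Nat.factorial n : ℝ) := by exact_mod_cast n.factorial_pos
  have hpow : (0:ℝ) < (n:ℝ) ^ x := Real.rpow_pos_of_pos hn0 x
  have hGam : Real.Gamma (x + n + 1) = (∏ j ∈ Finset.range (n+1), (x + j)) * Real.Gamma x :=
    gamma_prod hx n
  rw [Real.GammaSeq, Real.log_div (by positivity) hGx.ne', Real.log_div (by positivity) hprod.ne',
      Real.log_mul hpow.ne' hfac.ne', Real.log_rpow hn0, hGam, Real.log_mul hprod.ne' hGx.ne']
  ring

lemma A_tendsto {x : ℝ} (hx : 0 < x) :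
    Tendsto (fun n : ℕ => x * Real.log n + x - (x + n + 1/2) * Real.log (x + n + 1)
      + ((n:ℝ) + 1/2) * Real.log ((n:ℝ)+1)) atTop (𝓝 0) := by
  have hcast : Tendsto (fun n : ℕ => ((n:ℝ) + 1)) atTop atTop :=
    tendsto_atTop_add_const_right atTop 1 tendsto_natCast_atTop_atTop
  have T1 : Tendsto (fun n : ℕ => Real.log n - Real.log ((n:ℝ)+1)) atTop (𝓝 0) := by
    have ha : Tendsto (fun n : ℕ => 1 + 1/(n:ℝ)) atTop (𝓝 1) := by
      have h0 : Tendsto (fun n : ℕ => 1/(n:ℝ)) atTop (𝓝 0) := tendsto_one_div_atTop_nhds_zero_nat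
      have := (tendsto_const_nhds : Tendsto (fun _ : ℕ => (1:ℝ)) atTop (𝓝 1)).add h0
      rw [add_zero] at this
      exact this
    have hb : Tendsto (fun n : ℕ => Real.log (1 + 1/(n:ℝ))) atTop (𝓝 0) := by
      have := (Real.continuousAt_log one_ne_zero).tendsto.comp ha
      rw [Real.log_one] at this
      exact this
    have hc : Tendsto (fun n : ℕ => -Real.log (1 + 1/(n:ℝ))) atTop (𝓝 0) := by simpa using hb.neg
    refine hc.congr' ?_
    filter_upwards [eventually_ge_atTop 1] with n hn
    have hn0 : (0:ℝ) < n := by exact_mod_cast hn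
    rw [show (1 + 1/(n:ℝ)) = ((n:ℝ)+1)/n by field_simp, Real.log_div (by positivity) hn0.ne']
    ring
  have T2 : Tendsto (fun n : ℕ => ((n:ℝ)+1) * Real.log (1 + x/((n:ℝ)+1))) atTop (𝓝 x) :=
    (Real.tendsto_mul_log_one_add_div_atTop x).comp hcast
  have T3 : Tendsto (fun n : ℕ => Real.log (1 + x/((n:ℝ)+1))) atTop (𝓝 0) := by
    have hd : Tendsto (fun n : ℕ => x/((n:ℝ)+1)) atTop (𝓝 0) :=
      Tendsto.div_atTop tendsto_const_nhds hcast
    have : Tendsto (fun n : ℕ => 1 + x/((n:ℝ)+1)) atTop (𝓝 1) := by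
      simpa using tendsto_const_nhds.add hd
    have := (Real.continuousAt_log one_ne_zero).tendsto.comp this
    rw [Real.log_one] at this
    exact this
  have C := ((T1.const_mul x).add ((tendsto_const_nhds : Tendsto (fun _ : ℕ => x) atTop (𝓝 x)).sub T2)).sub (T3.const_mul (x - 1/2))
  have hlim : x * 0 + (x - x) - (x - 1/2) * 0 = 0 := by ring
  rw [hlim] at C
  refine C.congr (fun n => ?_)
  have hsplit : Real.log (x + n + 1) = Real.log ((n:ℝ)+1) + Real.log (1 + x/((n:ℝ)+1)) := by
    rw [← Real.log_mul (by positivity) (by positivity)]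
    congr 1
    field_simp
    ring
  rw [hsplit]
  ring

lemma uu_diff_tendsto {x : ℝ} (hx : 0 < x) :
    Tendsto (fun n : ℕ => uu (x + n + 1) - uu ((n:ℝ) + 1)) atTop (𝓝 0) := by
  have h := (log_ratio_tendsto hx).add (A_tendsto hx)
  rw [add_zero] at h
  refine h.congr (fun n => ?_)
  unfold uu
  rw [Real.Gamma_nat_eq_factorial n]
  ring

lemma uu_convex : ConvexOn ℝ (Ioi (0:ℝ)) uu := by
  refine ⟨convex_Ioi 0, ?_⟩
  intro x hx y hy s t hs ht hst
  have hx' : 0 < x := hx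
  have hy' : 0 < y := hy
  have hz : (0:ℝ) < s * x + t * y := by
    rcases eq_or_lt_of_le hs with h | h
    · have ht1 : t = 1 := by linarith
      rw [← h, ht1]; simpa using hy'
    · have : 0 ≤ t * y := mul_nonneg ht hy'.le
      nlinarith
  simp only [smul_eq_mul]
  set z := s * x + t * y with hzdef
  -- key inequality for each n
  have key : ∀ n : ℕ, uu z - uu (z + n) ≤ s * (uu x - uu (x + n)) + t * (uu y - uu (y + n)) := by
    intro n
    have hsum : ∑ k ∈ Finset.range n, dd (z + k) ≤
        s * ∑ k ∈ Finset.range n, dd (x + k) + t * ∑ k ∈ Finset.range n, dd (y + k) := by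
      rw [Finset.mul_sum, Finset.mul_sum, ← Finset.sum_add_distrib]
      refine Finset.sum_le_sum (fun k _ => ?_)
      have hcv := dd_strictConvex.convexOn.2 (show x + (k:ℝ) ∈ Ioi (0:ℝ) by simp; positivity)
        (show y + (k:ℝ) ∈ Ioi (0:ℝ) by simp; positivity) hs ht hst
      simp only [smul_eq_mul] at hcv
      have harg : s * (x + (k:ℝ)) + t * (y + (k:ℝ)) = z + k := by
        rw [hzdef]; nlinarith [hst]
      rwa [harg] at hcv
    have h1 := uu_telescope hz n
    have h2 := uu_telescope hx' n
    have h3 := uu_telescope hy' n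
    have e1 : uu z - uu (z + n) = ∑ k ∈ Finset.range n, dd (z + k) := by linarith
    have e2 : uu x - uu (x + n) = ∑ k ∈ Finset.range n, dd (x + k) := by linarith
    have e3 : uu y - uu (y + n) = ∑ k ∈ Finset.range n, dd (y + k) := by linarith
    rw [e1, e2, e3]
    exact hsum
  -- limit of the error term
  have hB : Tendsto (fun m : ℕ => (uu (z + m + 1) - uu ((m:ℝ)+1))
      - s * (uu (x + m + 1) - uu ((m:ℝ)+1)) - t * (uu (y + m + 1) - uu ((m:ℝ)+1)))
      atTop (𝓝 0) := by
    have := ((uu_diff_tendsto hz).sub ((uu_diff_tendsto hx').const_mul s)).sub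
      ((uu_diff_tendsto hy').const_mul t)
    simpa using this
  have hle : ∀ m : ℕ, uu z - s * uu x - t * uu y ≤
      (uu (z + m + 1) - uu ((m:ℝ)+1))
      - s * (uu (x + m + 1) - uu ((m:ℝ)+1)) - t * (uu (y + m + 1) - uu ((m:ℝ)+1)) := by
    intro m
    have hk := key (m + 1)
    have hc : ((m+1:ℕ):ℝ) = (m:ℝ) + 1 := by push_cast; ring
    rw [show z + ((m+1:ℕ):ℝ) = z + (m:ℝ) + 1 by push_cast; ring,
        show x + ((m+1:ℕ):ℝ) = x + (m:ℝ) + 1 by push_cast; ring,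
        show y + ((m+1:ℕ):ℝ) = y + (m:ℝ) + 1 by push_cast; ring] at hk
    have hmul : s * uu ((m:ℝ)+1) + t * uu ((m:ℝ)+1) = uu ((m:ℝ)+1) := by
      have : (s + t) * uu ((m:ℝ)+1) = 1 * uu ((m:ℝ)+1) := by rw [hst]
      linarith [this]
    linarith [hk, hmul]
  have := ge_of_tendsto' hB hle
  linarith

noncomputable def pp (a c1 c0 : ℝ) (b : ℝ) : ℝ := ((a+b)/2) * Real.log b + c1 * b + c0
noncomputable def pp1 (a c1 : ℝ) (b : ℝ) : ℝ := (1/2) * Real.log b + (a+b)/(2*b) + c1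

lemma hasDerivAt_pp {a c1 c0 b : ℝ} (hb : 0 < b) : HasDerivAt (pp a c1 c0) (pp1 a c1 b) b := by
  have h1 : HasDerivAt (fun y : ℝ => ((a+y)/2) * Real.log y) ((1/2) * Real.log b + (a+b)/(2*b)) b := by
    have ha : HasDerivAt (fun y : ℝ => (a+y)/2) (1/2) b := by
      simpa using (((hasDerivAt_id b).const_add a).div_const 2)
    have hl : HasDerivAt Real.log (1/b) b := by
      simpa [one_div] using Real.hasDerivAt_log hb.ne'
    have := ha.mul hl
    refine this.congr_deriv ?_
    field_simp
  have := (h1.add_const 0).add ((hasDerivAt_id b).const_mul c1)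
  have h2 : HasDerivAt (fun y : ℝ => ((a+y)/2) * Real.log y + c1 * y + c0)
      ((1/2) * Real.log b + (a+b)/(2*b) + c1) b := by
    have := h1.add ((hasDerivAt_id b).const_mul c1)
    have := this.add_const c0
    exact this.congr_deriv (by ring)
  exact h2

lemma hasDerivAt_pp1 {a c1 b : ℝ} (hb : 0 < b) :
    HasDerivAt (pp1 a c1) ((b - a)/(2*b^2)) b := by
  have hl : HasDerivAt (fun y : ℝ => (1/2) * Real.log y) ((1/2) * (1/b)) b := by
    exact ((Real.hasDerivAt_log hb.ne').const_mul _).congr_deriv (by simp [one_div])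
  have h2 : HasDerivAt (fun y : ℝ => (a+y)/(2*y)) (-a/(2*b^2)) b := by
    have hnum : HasDerivAt (fun y : ℝ => a + y) 1 b := (hasDerivAt_id b).const_add a
    have hden : HasDerivAt (fun y : ℝ => 2*y) 2 b := by simpa using (hasDerivAt_id b).const_mul 2
    have := hnum.div hden (by positivity)
    refine this.congr_deriv ?_
    field_simp
    ring
  have := (hl.add h2).add_const c1
  refine this.congr_deriv ?_
  field_simp
  ring

lemma pp_strictConvex {a : ℝ} (ha : 0 < a) (c1 c0 : ℝ) :
    StrictConvexOn ℝ (Ici a) (pp a c1 c0) := by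
  apply strictConvexOn_of_deriv2_pos (convex_Ici a)
  · intro x hx
    have hx' : 0 < x := lt_of_lt_of_le ha hx
    exact (hasDerivAt_pp hx').continuousAt.continuousWithinAt
  · intro x hx
    rw [interior_Ici] at hx
    have hx' : 0 < x := lt_trans ha hx
    have hd : deriv (pp a c1 c0) =ᶠ[nhds x] pp1 a c1 := by
      filter_upwards [eventually_gt_nhds hx'] with y hy using (hasDerivAt_pp hy).deriv
    simp only [Function.iterate_succ, Function.iterate_zero, Function.comp_apply, id_eq]
    rw [Filter.EventuallyEq.deriv_eq hd, (hasDerivAt_pp1 hx').deriv]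
    have : (0:ℝ) < x - a := by simpa using hx
    exact div_pos (by linarith) (by positivity)

lemma main_ineq {a b : ℝ} (ha : 0 < a) (hab : a < b) :
    (b < a + 1 → Real.log (Real.Gamma b) - Real.log (Real.Gamma a)
       - (b-a)*(Real.log a + Real.log b)/2 + (Real.log b - Real.log a)/2 < 0) ∧
    (a + 1 < b → 0 < Real.log (Real.Gamma b) - Real.log (Real.Gamma a)
       - (b-a)*(Real.log a + Real.log b)/2 + (Real.log b - Real.log a)/2) := by
  set G : ℝ → ℝ := fun u => Real.log (Real.Gamma u) - Real.log (Real.Gamma a)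
       - (u-a)*(Real.log a + Real.log u)/2 + (Real.log u - Real.log a)/2 with hGdef
  set c1 : ℝ := -(Real.log a)/2 - 1
  set c0 : ℝ := a * Real.log a / 2 - Real.log a / 2 - Real.log (Real.Gamma a)
  have hEq : G = fun u => uu u + pp a c1 c0 u := by
    funext u
    simp only [hGdef, uu, pp, c1, c0]
    ring
  have hIci : Ici a ⊆ Ioi (0:ℝ) := fun u hu => lt_of_lt_of_le ha hu
  have hG : StrictConvexOn ℝ (Ici a) G := by
    rw [hEq]
    exact (uu_convex.subset hIci (convex_Ici a)).add_strictConvexOn (pp_strictConvex ha c1 c0)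
  have hGa : G a = 0 := by simp only [hGdef]; ring
  have hGa1 : G (a+1) = 0 := by
    have h1 : Real.Gamma (a+1) = a * Real.Gamma a := Real.Gamma_add_one ha.ne'
    have h2 : 0 < Real.Gamma a := Real.Gamma_pos_of_pos ha
    simp only [hGdef]
    rw [h1, Real.log_mul ha.ne' h2.ne']
    ring
  constructor
  · intro hb1
    have hs : (0:ℝ) < a + 1 - b := by linarith
    have ht : (0:ℝ) < b - a := by linarith
    have hne : a ≠ a + 1 := by linarith
    have := hG.2 (self_mem_Ici) (mem_Ici.mpr (by linarith)) hne hs ht (by ring)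
    simp only [smul_eq_mul] at this
    rw [show (a+1-b) * a + (b-a) * (a+1) = b by ring, hGa, hGa1] at this
    calc G b < (a+1-b) * 0 + (b-a) * 0 := this
    _ = 0 := by ring
  · intro hb1
    have hba : (0:ℝ) < b - a := by linarith
    have hs : (0:ℝ) < (b-a-1)/(b-a) := div_pos (by linarith) hba
    have ht : (0:ℝ) < 1/(b-a) := by positivity
    have hne : a ≠ b := by linarith
    have hsum : (b-a-1)/(b-a) + 1/(b-a) = 1 := by field_simp; ring
    have := hG.2 (self_mem_Ici) (mem_Ici.mpr (by linarith)) hne hs ht hsum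
    simp only [smul_eq_mul] at this
    rw [show (b-a-1)/(b-a) * a + 1/(b-a) * b = a + 1 by field_simp; ring, hGa, hGa1] at this
    have hpos : 0 < 1/(b-a) * G b := by nlinarith [this]
    show 0 < G b
    by_contra hcon
    push_neg at hcon
    nlinarith [mul_nonpos_of_nonneg_of_nonpos ht.le hcon]

theorem gamma_ratio_sqrt_ineq (a b : ℝ) (ha : 0 < a) (hb : 0 < b) (hab : a ≠ b) :
    (0 < |b - a| → |b - a| < 1 →
      (Real.Gamma b / Real.Gamma a) ^ (1 / (b - a)) <
        Real.sqrt (a * b) * (a / b) ^ (1 / (2 * (b - a)))) ∧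
    (1 < |b - a| →
      Real.sqrt (a * b) * (a / b) ^ (1 / (2 * (b - a))) <
        (Real.Gamma b / Real.Gamma a) ^ (1 / (b - a))) := by
  have hGa := Real.Gamma_pos_of_pos ha
  have hGb := Real.Gamma_pos_of_pos hb
  have hr : 0 < Real.Gamma b / Real.Gamma a := div_pos hGb hGa
  have hdpos : 0 < a / b := div_pos ha hb
  have hL : (Real.Gamma b / Real.Gamma a) ^ (1 / (b-a)) =
      Real.exp ((Real.log (Real.Gamma b) - Real.log (Real.Gamma a)) * (1/(b-a))) := by
    rw [Real.rpow_def_of_pos hr, Real.log_div hGb.ne' hGa.ne']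
  have hR : Real.sqrt (a*b) * (a/b) ^ (1/(2*(b-a))) =
      Real.exp ((Real.log a + Real.log b)/2 + (Real.log a - Real.log b) * (1/(2*(b-a)))) := by
    rw [Real.sqrt_eq_rpow, Real.rpow_def_of_pos (mul_pos ha hb), Real.rpow_def_of_pos hdpos,
        ← Real.exp_add, Real.log_mul ha.ne' hb.ne', Real.log_div ha.ne' hb.ne']
    congr 1
    ring
  rw [hL, hR]
  constructor
  · intro _ h1
    rw [Real.exp_lt_exp]
    rcases lt_or_gt_of_ne hab with hlt | hgt
    · have habs : |b - a| = b - a := abs_of_pos (by linarith)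
      rw [habs] at h1
      have hM := (main_ineq ha hlt).1 (by linarith)
      have hne : b - a ≠ 0 := ne_of_gt (by linarith)
      have hinv : 0 < 1/(b-a) := one_div_pos.mpr (by linarith)
      have e : ((Real.log a + Real.log b)/2 + (Real.log a - Real.log b) * (1/(2*(b-a))))
          - (Real.log (Real.Gamma b) - Real.log (Real.Gamma a)) * (1/(b-a))
          = (1/(b-a)) * (-(Real.log (Real.Gamma b) - Real.log (Real.Gamma a)
            - (b-a)*(Real.log a + Real.log b)/2 + (Real.log b - Real.log a)/2)) := by
        field_simp
        ring
      have hpos : 0 < ((Real.log a + Real.log b)/2 + (Real.log a - Real.log b) * (1/(2*(b-a))))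
          - (Real.log (Real.Gamma b) - Real.log (Real.Gamma a)) * (1/(b-a)) := by
        rw [e]; exact mul_pos hinv (by linarith)
      linarith
    · have habs : |b - a| = a - b := by rw [abs_sub_comm]; exact abs_of_pos (by linarith)
      rw [habs] at h1
      have hM := (main_ineq hb hgt).1 (by linarith)
      have hinv : 1/(b-a) < 0 := by
        apply one_div_neg.mpr; linarith
      have e : ((Real.log a + Real.log b)/2 + (Real.log a - Real.log b) * (1/(2*(b-a))))
          - (Real.log (Real.Gamma b) - Real.log (Real.Gamma a)) * (1/(b-a))
          = (1/(b-a)) * (Real.log (Real.Gamma a) - Real.log (Real.Gamma b)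
            - (a-b)*(Real.log b + Real.log a)/2 + (Real.log a - Real.log b)/2) := by
        have : b - a ≠ 0 := by intro h; apply hab; linarith
        field_simp
        ring
      have hpos : 0 < ((Real.log a + Real.log b)/2 + (Real.log a - Real.log b) * (1/(2*(b-a))))
          - (Real.log (Real.Gamma b) - Real.log (Real.Gamma a)) * (1/(b-a)) := by
        rw [e]; exact mul_pos_of_neg_of_neg hinv hM
      linarith
  · intro h1
    rw [Real.exp_lt_exp]
    rcases lt_or_gt_of_ne hab with hlt | hgt
    · have habs : |b - a| = b - a := abs_of_pos (by linarith)
      rw [habs] at h1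
      have hM := (main_ineq ha hlt).2 (by linarith)
      have hne : b - a ≠ 0 := ne_of_gt (by linarith)
      have hinv : 0 < 1/(b-a) := one_div_pos.mpr (by linarith)
      have e : (Real.log (Real.Gamma b) - Real.log (Real.Gamma a)) * (1/(b-a))
          - ((Real.log a + Real.log b)/2 + (Real.log a - Real.log b) * (1/(2*(b-a))))
          = (1/(b-a)) * (Real.log (Real.Gamma b) - Real.log (Real.Gamma a)
            - (b-a)*(Real.log a + Real.log b)/2 + (Real.log b - Real.log a)/2) := by
        field_simp
        ring
      have hpos : 0 < (Real.log (Real.Gamma b) - Real.log (Real.Gamma a)) * (1/(b-a))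
          - ((Real.log a + Real.log b)/2 + (Real.log a - Real.log b) * (1/(2*(b-a)))) := by
        rw [e]; exact mul_pos hinv hM
      linarith
    · have habs : |b - a| = a - b := by rw [abs_sub_comm]; exact abs_of_pos (by linarith)
      rw [habs] at h1
      have hM := (main_ineq hb hgt).2 (by linarith)
      have hinv : 1/(b-a) < 0 := by
        apply one_div_neg.mpr; linarith
      have e : (Real.log (Real.Gamma b) - Real.log (Real.Gamma a)) * (1/(b-a))
          - ((Real.log a + Real.log b)/2 + (Real.log a - Real.log b) * (1/(2*(b-a))))
          = (1/(b-a)) * (-(Real.log (Real.Gamma a) - Real.log (Real.Gamma b)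
            - (a-b)*(Real.log b + Real.log a)/2 + (Real.log a - Real.log b)/2)) := by
        have : b - a ≠ 0 := by intro h; apply hab; linarith
        field_simp
        ring
      have hpos : 0 < (Real.log (Real.Gamma b) - Real.log (Real.Gamma a)) * (1/(b-a))
          - ((Real.log a + Real.log b)/2 + (Real.log a - Real.log b) * (1/(2*(b-a)))) := by
        rw [e]; exact mul_pos_of_neg_of_neg hinv (by linarith)
      linarith
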